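/- For every γ > 0 there exists B₀ such that the following holds for every even integer B ≥ B₀. Let σ be a probability mass function on Fin B, let τ be a probability mass function on pair-selections, and let (s,t) be drawn from the product distribution σ × τ. Then the following three conditions cannot hold simultaneously: (i) Pr[s ∈ T(t)] ≤ 1/42; (ii) the conditional entropy H(s | t), computed under σ × τ conditioned on the event s ∉ T(t), is at least (1 − γ)·log₂ B; (iii) the conditional entropy H(t | s), computed under σ × τ conditioned on the event s ∉ T(t), is at least B/2 − (1/840)·B^{1−7γ}. -/

import Mathlib

open Finset

/-- `memT t x` : the element `x ∈ Fin B` belongs to the set `T(t)` determined by the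
pair-selection `t : Fin (B/2) → Bool`, namely `T(t) = { 2k + (if t k then 1 else 0) }`. -/
def memT {B : ℕ} (t : Fin (B / 2) → Bool) (x : Fin B) : Prop :=
  ∃ k : Fin (B / 2), (x : ℕ) = 2 * (k : ℕ) + (if t k then 1 else 0)

instance {B : ℕ} (t : Fin (B / 2) → Bool) (x : Fin B) : Decidable (memT t x) := by
  unfold memT; infer_instance

/-- The probability that `s ∈ T(t)` when `(s,t)` is drawn from the product `σ × τ`. -/
noncomputable def prHit {B : ℕ} (σ : Fin B → ℝ) (τ : (Fin (B / 2) → Bool) → ℝ) : ℝ :=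
  ∑ x : Fin B, ∑ t : Fin (B / 2) → Bool, if memT t x then σ x * τ t else 0

/-- The joint distribution `σ × τ` conditioned on the event `s ∉ T(t)`. -/
noncomputable def condJoint {B : ℕ} (σ : Fin B → ℝ) (τ : (Fin (B / 2) → Bool) → ℝ)
    (x : Fin B) (t : Fin (B / 2) → Bool) : ℝ :=
  (if memT t x then 0 else σ x * τ t) /
    ∑ x' : Fin B, ∑ t' : Fin (B / 2) → Bool, if memT t' x' then 0 else σ x' * τ t'

/-- `H(s | t)`, in bits, under `σ × τ` conditioned on `s ∉ T(t)`:
`H(s | t) = ∑_t Pr[t] · H(s | t = t) = ∑_t ∑_x −p(x,t) · log₂ (p(x,t)/p(t))`. -/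
noncomputable def condEntS {B : ℕ} (σ : Fin B → ℝ) (τ : (Fin (B / 2) → Bool) → ℝ) : ℝ :=
  ∑ t : Fin (B / 2) → Bool, ∑ x : Fin B,
    -(condJoint σ τ x t) *
      Real.logb 2 (condJoint σ τ x t / ∑ x' : Fin B, condJoint σ τ x' t)

/-- `H(t | s)`, in bits, under `σ × τ` conditioned on `s ∉ T(t)`. -/
noncomputable def condEntT {B : ℕ} (σ : Fin B → ℝ) (τ : (Fin (B / 2) → Bool) → ℝ) : ℝ :=
  ∑ x : Fin B, ∑ t : Fin (B / 2) → Bool,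
    -(condJoint σ τ x t) *
      Real.logb 2 (condJoint σ τ x t / ∑ t' : Fin (B / 2) → Bool, condJoint σ τ x t')

private lemma lnA {a c : ℝ} (ha : 0 ≤ a) (hc : 0 < c) :
    a * Real.log a⁻¹ ≤ a * Real.log c⁻¹ + (c - a) := by
  rcases eq_or_lt_of_le ha with h | h
  · simp [← h]; linarith
  · have h1 : Real.log a⁻¹ - Real.log c⁻¹ = Real.log (c / a) := by
      rw [Real.log_inv, Real.log_inv, Real.log_div (ne_of_gt hc) (ne_of_gt h)]; ring
    have h2 : Real.log (c / a) ≤ c / a - 1 :=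
      Real.log_le_sub_one_of_pos (by positivity)
    have h3 : a * Real.log (c / a) ≤ c - a := by
      have := mul_le_mul_of_nonneg_left h2 ha
      rw [mul_sub] at this
      rw [mul_div_cancel₀] at this <;> [linarith; exact ne_of_gt h]
    nlinarith [h1, h3]

private lemma key_ln {ι : Type*} (F : Finset ι) (a b : ι → ℝ)
    (ha : ∀ i ∈ F, 0 ≤ a i) (hb : ∀ i ∈ F, 0 ≤ b i)
    (hab : ∀ i ∈ F, 0 < a i → 0 < b i) :
    ∑ i ∈ F, -(a i) * Real.log (a i / b i) ≤
      (∑ i ∈ F, a i) * Real.log ((∑ i ∈ F, b i) / (∑ i ∈ F, a i)) := by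
  set A := ∑ i ∈ F, a i with hA
  set Bs := ∑ i ∈ F, b i with hBs
  rcases eq_or_lt_of_le (Finset.sum_nonneg ha) with h0 | hApos
  · have hz : ∀ i ∈ F, a i = 0 := by
      intro i hi
      exact (Finset.sum_eq_zero_iff_of_nonneg ha).mp h0.symm i hi
    have : ∑ i ∈ F, -(a i) * Real.log (a i / b i) = 0 :=
      Finset.sum_eq_zero fun i hi => by rw [hz i hi]; ring
    rw [this, hA, ← h0, zero_mul]
  · have hBpos : 0 < Bs := by
      obtain ⟨i, hi, hia⟩ : ∃ i ∈ F, 0 < a i := by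
        by_contra hcon
        push_neg at hcon
        have : A ≤ 0 := Finset.sum_nonpos fun i hi => hcon i hi
        linarith
      have hbi := hab i hi hia
      calc (0:ℝ) < b i := hbi
        _ ≤ Bs := Finset.single_le_sum hb hi
    have hmain : ∀ i ∈ F, -(a i) * Real.log (a i / b i)
        ≤ a i * Real.log (Bs / A) + (A / Bs) * b i - a i := by
      intro i hi
      rcases eq_or_lt_of_le (ha i hi) with h0 | hpos
      · rw [← h0]; simp
        have h5 := hb i hi
        have h6 : 0 ≤ A / Bs := by positivity
        positivity
      · have hbi := hab i hi hpos
        have hx : (0:ℝ) < b i * A / (a i * Bs) := by positivity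
        have hlog : Real.log (b i * A / (a i * Bs)) ≤ b i * A / (a i * Bs) - 1 :=
          Real.log_le_sub_one_of_pos hx
        have hsplit : Real.log (a i / b i) =
            - Real.log (Bs / A) - Real.log (b i * A / (a i * Bs)) := by
          rw [Real.log_div (ne_of_gt hpos) (ne_of_gt hbi),
            Real.log_div (ne_of_gt hBpos) (ne_of_gt hApos),
            Real.log_div (by positivity) (by positivity),
            Real.log_mul (ne_of_gt hbi) (ne_of_gt hApos),
            Real.log_mul (ne_of_gt hpos) (ne_of_gt hBpos)]
          ring
        rw [hsplit]
        have h4 : a i * Real.log (b i * A / (a i * Bs)) ≤ A / Bs * b i - a i := by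
          have := mul_le_mul_of_nonneg_left hlog (le_of_lt hpos)
          have he : a i * (b i * A / (a i * Bs)) = A / Bs * b i := by
            field_simp
          nlinarith
        nlinarith
    calc ∑ i ∈ F, -(a i) * Real.log (a i / b i)
        ≤ ∑ i ∈ F, (a i * Real.log (Bs / A) + (A / Bs) * b i - a i) :=
          Finset.sum_le_sum hmain
      _ = A * Real.log (Bs / A) + (A / Bs) * Bs - A := by
          rw [Finset.sum_sub_distrib, Finset.sum_add_distrib, ← Finset.sum_mul, ← Finset.mul_sum, ← hA, ← hBs]
      _ ≤ A * Real.log (Bs / A) := by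
          rw [div_mul_cancel₀ _ (ne_of_gt hBpos)]; linarith

private lemma key {ι : Type*} (F : Finset ι) (a b : ι → ℝ)
    (ha : ∀ i ∈ F, 0 ≤ a i) (hb : ∀ i ∈ F, 0 ≤ b i)
    (hab : ∀ i ∈ F, 0 < a i → 0 < b i) :
    ∑ i ∈ F, -(a i) * Real.logb 2 (a i / b i) ≤
      (∑ i ∈ F, a i) * Real.logb 2 ((∑ i ∈ F, b i) / (∑ i ∈ F, a i)) := by
  have hlog2 : (0:ℝ) < Real.log 2 := Real.log_pos one_lt_two
  have h := key_ln F a b ha hb hab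
  simp only [Real.logb, mul_div_assoc']
  rw [← Finset.sum_div]
  exact div_le_div_of_nonneg_right h hlog2.le

private lemma xlogx_le {x : ℝ} (h0 : 0 ≤ x) (h1 : x ≤ 1) :
    x * Real.logb 2 x⁻¹ ≤ 3/2 := by
  have hlog2 : (0:ℝ) < Real.log 2 := Real.log_pos one_lt_two
  have h23 : (2:ℝ)/3 < Real.log 2 := by
    have := Real.log_two_gt_d9; linarith
  have h := lnA h0 one_pos
  simp only [inv_one, Real.log_one, mul_zero, zero_add] at h
  have : x * Real.logb 2 x⁻¹ = x * Real.log x⁻¹ / Real.log 2 := by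
    rw [Real.logb]; ring
  rw [this, div_le_iff₀ hlog2]
  nlinarith

private lemma bin_bound {p q c d : ℝ} (hp : 0 ≤ p) (hq : 0 ≤ q) (hpq : p + q = 1)
    (hc : 0 < c) (hd : 0 < d) (hcd : c + d = 1) :
    p * Real.logb 2 p⁻¹ + q * Real.logb 2 q⁻¹ ≤
      p * Real.logb 2 c⁻¹ + q * Real.logb 2 d⁻¹ := by
  have hlog2 : (0:ℝ) < Real.log 2 := Real.log_pos one_lt_two
  have h1 := lnA hp hc
  have h2 := lnA hq hd
  simp only [Real.logb]
  simp only [mul_div_assoc']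
  rw [← add_div, ← add_div]
  apply div_le_div_of_nonneg_right _ hlog2.le
  linarith

private lemma bin_le_one {p q : ℝ} (hp : 0 ≤ p) (hq : 0 ≤ q) (hpq : p + q = 1) :
    p * Real.logb 2 p⁻¹ + q * Real.logb 2 q⁻¹ ≤ 1 := by
  have h := bin_bound hp hq hpq (by norm_num : (0:ℝ) < 1/2) (by norm_num : (0:ℝ) < 1/2) (by norm_num)
  have h2 : Real.logb 2 ((1:ℝ)/2)⁻¹ = 1 := by
    norm_num
  rw [h2] at h
  linarith

private lemma num_bound : (2/5) * Real.logb 2 ((2/5:ℝ))⁻¹ + (3/5) * Real.logb 2 ((3/5:ℝ))⁻¹ ≤ 49/50 := by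
  have hlog2 : (0:ℝ) < Real.log 2 := Real.log_pos one_lt_two
  have h5 : Real.log ((2/5:ℝ))⁻¹ = Real.log 5 - Real.log 2 := by
    rw [show ((2/5:ℝ))⁻¹ = 5/2 by norm_num, Real.log_div (by norm_num) (by norm_num)]
  have h3 : Real.log ((3/5:ℝ))⁻¹ = Real.log 5 - Real.log 3 := by
    rw [show ((3/5:ℝ))⁻¹ = 5/3 by norm_num, Real.log_div (by norm_num) (by norm_num)]
  have hmain : 50 * Real.log 5 ≤ 69 * Real.log 2 + 30 * Real.log 3 := by
    have h1 : Real.log ((5:ℝ)^(50:ℕ)) ≤ Real.log ((2:ℝ)^(69:ℕ) * (3:ℝ)^(30:ℕ)) := by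
      apply Real.log_le_log (by positivity)
      norm_num
    rw [Real.log_pow, Real.log_mul (by positivity) (by positivity), Real.log_pow, Real.log_pow] at h1
    push_cast at h1
    linarith
  simp only [Real.logb, h5, h3, mul_div_assoc']
  rw [← add_div, div_le_iff₀ hlog2]
  nlinarith [Real.log_pos (by norm_num : (1:ℝ) < 3), Real.log_pos (by norm_num : (1:ℝ) < 5)]

private lemma bin_le_small {p q : ℝ} (hp : 0 ≤ p) (hq : 0 ≤ q) (hpq : p + q = 1)
    (hps : p ≤ 2/5) :
    p * Real.logb 2 p⁻¹ + q * Real.logb 2 q⁻¹ ≤ 49/50 := by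
  have h := bin_bound hp hq hpq (by norm_num : (0:ℝ) < 2/5) (by norm_num : (0:ℝ) < 3/5) (by norm_num)
  have hmono : p * Real.logb 2 ((2/5:ℝ))⁻¹ + q * Real.logb 2 ((3/5:ℝ))⁻¹ ≤
      (2/5) * Real.logb 2 ((2/5:ℝ))⁻¹ + (3/5) * Real.logb 2 ((3/5:ℝ))⁻¹ := by
    have e1 : Real.logb 2 ((3/5:ℝ))⁻¹ ≤ Real.logb 2 ((2/5:ℝ))⁻¹ := by
      apply Real.logb_le_logb_of_le one_lt_two (by norm_num)
      norm_num
    have e2 : (0:ℝ) ≤ Real.logb 2 ((3/5:ℝ))⁻¹ := by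
      apply Real.logb_nonneg one_lt_two
      norm_num
    have hq' : q = 1 - p := by linarith
    nlinarith
  linarith [num_bound]

private lemma group_bound {ι : Type*} (F : Finset ι) (p : ι → ℝ)
    (hp : ∀ i ∈ F, 0 ≤ p i) (h1 : ∑ i ∈ F, p i ≤ 1) :
    ∑ i ∈ F, p i * Real.logb 2 (p i)⁻¹ ≤
      (∑ i ∈ F, p i) * Real.logb 2 (max 1 (F.card : ℝ)) + 3/2 := by
  set A := ∑ i ∈ F, p i with hA
  have hkey := key F p (fun _ => 1) hp (fun i _ => zero_le_one) (fun i _ _ => one_pos)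
  have hsum1 : ∑ _i ∈ F, (1:ℝ) = (F.card : ℝ) := by simp
  have hterm : ∀ i ∈ F, p i * Real.logb 2 (p i)⁻¹ = -(p i) * Real.logb 2 (p i / 1) := by
    intro i _
    rw [div_one, Real.logb_inv]; ring
  rw [Finset.sum_congr rfl hterm]
  rcases eq_or_lt_of_le (Finset.sum_nonneg hp) with h0 | hApos
  · have hz : ∀ i ∈ F, p i = 0 := fun i hi =>
      (Finset.sum_eq_zero_iff_of_nonneg hp).mp h0.symm i hi
    have hL : ∑ i ∈ F, -(p i) * Real.logb 2 (p i / 1) = 0 :=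
      Finset.sum_eq_zero fun i hi => by rw [hz i hi]; ring
    rw [hL, hA, ← h0]
    norm_num
  · have hApos' : 0 < A := hApos
    have hcard : 0 < (F.card : ℝ) := by
      have : F.Nonempty := by
        by_contra hc
        rw [Finset.not_nonempty_iff_eq_empty] at hc
        rw [hc] at hA; simp at hA; rw [hA] at hApos'; linarith
      exact_mod_cast Finset.card_pos.mpr this
    have hsplit : Real.logb 2 ((F.card : ℝ) / A) =
        Real.logb 2 (F.card : ℝ) + Real.logb 2 A⁻¹ := by
      rw [Real.logb_div (ne_of_gt hcard) (ne_of_gt hApos'), Real.logb_inv]; ring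
    have h2 : A * Real.logb 2 (F.card : ℝ) ≤ A * Real.logb 2 (max 1 (F.card : ℝ)) := by
      apply mul_le_mul_of_nonneg_left _ hApos'.le
      exact Real.logb_le_logb_of_le one_lt_two hcard (le_max_right _ _)
    have h3 : A * Real.logb 2 A⁻¹ ≤ 3/2 := xlogx_le hApos'.le h1
    calc ∑ i ∈ F, -(p i) * Real.logb 2 (p i / 1) ≤ A * Real.logb 2 ((F.card : ℝ) / A) := by
          rw [hsum1] at hkey; exact hkey
      _ = A * Real.logb 2 (F.card : ℝ) + A * Real.logb 2 A⁻¹ := by rw [hsplit]; ring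
      _ ≤ A * Real.logb 2 (max 1 (F.card : ℝ)) + 3/2 := by linarith

private lemma memT_iff {B : ℕ} (t : Fin (B/2) → Bool) (x : Fin B)
    (hx : (x : ℕ)/2 < B/2) :
    memT t x ↔ t ⟨(x : ℕ)/2, hx⟩ = decide ((x : ℕ) % 2 = 1) := by
  constructor
  · rintro ⟨k, hk⟩
    have hkv : (k : ℕ) = (x : ℕ)/2 := by
      rcases Bool.eq_false_or_eq_true (t k) with h | h <;> rw [h] at hk <;> simp at hk <;> omega
    have hkk : k = ⟨(x : ℕ)/2, hx⟩ := Fin.ext hkv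
    rw [← hkk]
    rcases Bool.eq_false_or_eq_true (t k) with h | h <;> rw [h] at hk ⊢ <;> simp at hk ⊢ <;> omega
  · intro h
    refine ⟨⟨(x : ℕ)/2, hx⟩, ?_⟩
    rcases Bool.eq_false_or_eq_true (t ⟨(x : ℕ)/2, hx⟩) with h2 | h2 <;>
      rw [h2] at h ⊢ <;> simp at h ⊢ <;> omega

private lemma entS_le {B : ℕ} (σ : Fin B → ℝ) (τ : (Fin (B/2) → Bool) → ℝ)
    (hnn : ∀ x t, 0 ≤ condJoint σ τ x t)
    (hsum : ∑ t : Fin (B/2) → Bool, ∑ x : Fin B, condJoint σ τ x t = 1) :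
    condEntS σ τ ≤ ∑ x : Fin B,
      (∑ t, condJoint σ τ x t) * Real.logb 2 (∑ t, condJoint σ τ x t)⁻¹ := by
  unfold condEntS
  rw [Finset.sum_comm]
  apply Finset.sum_le_sum
  intro x _
  have hk := key Finset.univ (fun t => condJoint σ τ x t)
    (fun t => ∑ x' : Fin B, condJoint σ τ x' t)
    (fun t _ => hnn x t) (fun t _ => Finset.sum_nonneg fun x' _ => hnn x' t)
    (fun t _ hpos => lt_of_lt_of_le hpos
      (Finset.single_le_sum (fun x' _ => hnn x' t) (Finset.mem_univ x)))
  rw [hsum, one_div] at hk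
  exact hk

private lemma entT_le {B : ℕ} (σ : Fin B → ℝ) (τ : (Fin (B/2) → Bool) → ℝ)
    (hnn : ∀ x t, 0 ≤ condJoint σ τ x t)
    (hsum : ∑ x : Fin B, ∑ t : Fin (B/2) → Bool, condJoint σ τ x t = 1) :
    condEntT σ τ ≤ ∑ t : Fin (B/2) → Bool,
      (∑ x : Fin B, condJoint σ τ x t) * Real.logb 2 (∑ x : Fin B, condJoint σ τ x t)⁻¹ := by
  unfold condEntT
  rw [Finset.sum_comm]
  apply Finset.sum_le_sum
  intro t _
  have hk := key Finset.univ (fun x => condJoint σ τ x t)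
    (fun x => ∑ t' , condJoint σ τ x t')
    (fun x _ => hnn x t) (fun x _ => Finset.sum_nonneg fun t' _ => hnn x t')
    (fun x _ hpos => lt_of_lt_of_le hpos
      (Finset.single_le_sum (fun t' _ => hnn x t') (Finset.mem_univ t)))
  rw [hsum, one_div] at hk
  exact hk

private lemma subadd {n : ℕ} (q : (Fin n → Bool) → ℝ) (r : Fin n → Bool → ℝ)
    (hr : ∀ k b, r k b = ∑ t, if t k = b then q t else 0)
    (h0 : ∀ t, 0 ≤ q t) (h1 : ∑ t, q t = 1) :
    ∑ t, q t * Real.logb 2 (q t)⁻¹ ≤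
      ∑ k : Fin n, (r k true * Real.logb 2 (r k true)⁻¹
        + r k false * Real.logb 2 (r k false)⁻¹) := by
  have hrq : ∀ (t : Fin n → Bool) (k : Fin n), q t ≤ r k (t k) := by
    intro t k
    rw [hr]
    have := Finset.single_le_sum (f := fun t' => if t' k = t k then q t' else 0)
      (fun t' _ => by split <;> [exact h0 t'; exact le_rfl]) (Finset.mem_univ t)
    simpa using this
  have hrnn : ∀ k b, 0 ≤ r k b := by
    intro k b; rw [hr]
    exact Finset.sum_nonneg fun t _ => by split <;> [exact h0 t; exact le_rfl]
  have hrsum : ∀ k, r k true + r k false = 1 := by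
    intro k
    rw [hr, hr, ← Finset.sum_add_distrib, ← h1]
    apply Finset.sum_congr rfl
    intro t _
    cases ht : t k <;> simp [ht]
  set Q : (Fin n → Bool) → ℝ := fun t => ∏ k, r k (t k) with hQ
  have hQsum : ∑ t, Q t = 1 := by
    have hps := Finset.prod_univ_sum (κ := fun _ : Fin n => Bool)
      (fun _ => (Finset.univ : Finset Bool)) (fun k b => r k b)
    rw [Fintype.piFinset_univ] at hps
    have : ∀ k : Fin n, ∑ b ∈ (Finset.univ : Finset Bool), r k b = 1 := by
      intro k; rw [Fintype.sum_bool]; exact hrsum k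
    simp only [this, Finset.prod_const_one] at hps
    rw [hQ, ← hps]
  have hident : ∀ t, q t * Real.logb 2 (q t)⁻¹ =
      -(q t) * Real.logb 2 (q t / Q t) + ∑ k, q t * Real.logb 2 (r k (t k))⁻¹ := by
    intro t
    rcases eq_or_lt_of_le (h0 t) with hz | hpos
    · rw [← hz]; simp
    · have hrpos : ∀ k, 0 < r k (t k) := fun k => lt_of_lt_of_le hpos (hrq t k)
      have hQpos : 0 < Q t := Finset.prod_pos fun k _ => hrpos k
      have hlq : Real.logb 2 (Q t) = ∑ k, Real.logb 2 (r k (t k)) :=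
        Real.logb_prod _ _ fun k _ => ne_of_gt (hrpos k)
      rw [Real.logb_div (ne_of_gt hpos) (ne_of_gt hQpos)]
      simp only [Real.logb_inv]
      rw [← Finset.mul_sum, Finset.sum_neg_distrib, ← hlq]
      ring
  calc ∑ t, q t * Real.logb 2 (q t)⁻¹
      = (∑ t, -(q t) * Real.logb 2 (q t / Q t))
        + ∑ t, ∑ k, q t * Real.logb 2 (r k (t k))⁻¹ := by
        rw [← Finset.sum_add_distrib]
        exact Finset.sum_congr rfl fun t _ => hident t
    _ ≤ 0 + ∑ t, ∑ k, q t * Real.logb 2 (r k (t k))⁻¹ := by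
        have hk := key Finset.univ q Q (fun t _ => h0 t)
          (fun t _ => Finset.prod_nonneg fun k _ => hrnn k (t k))
          (fun t _ hpos => Finset.prod_pos fun k _ => lt_of_lt_of_le hpos (hrq t k))
        rw [h1, hQsum] at hk
        simp only [div_one, Real.logb_one, mul_zero] at hk
        linarith
    _ = ∑ k : Fin n, (r k true * Real.logb 2 (r k true)⁻¹
        + r k false * Real.logb 2 (r k false)⁻¹) := by
        rw [zero_add, Finset.sum_comm]
        apply Finset.sum_congr rfl
        intro k _
        have hstep : ∀ t : Fin n → Bool, q t * Real.logb 2 (r k (t k))⁻¹ =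
            ∑ b ∈ (Finset.univ : Finset Bool),
              if t k = b then q t * Real.logb 2 (r k b)⁻¹ else 0 := by
          intro t
          rw [Finset.sum_ite_eq]
          simp
        rw [Finset.sum_congr rfl fun t _ => hstep t, Finset.sum_comm]
        rw [Fintype.sum_bool]
        have hgather : ∀ b, (∑ t, if t k = b then q t * Real.logb 2 (r k b)⁻¹ else 0)
            = r k b * Real.logb 2 (r k b)⁻¹ := by
          intro b
          rw [hr, Finset.sum_mul]
          apply Finset.sum_congr rfl
          intro t _
          split <;> simp
        rw [hgather, hgather]

set_option maxHeartbeats 2000000 in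
theorem stmt0 (γ : ℝ) (hγ : 0 < γ) :
    ∃ B₀ : ℕ, ∀ B : ℕ, B₀ ≤ B → 2 ∣ B →
      ∀ σ : Fin B → ℝ, (∀ x, 0 ≤ σ x) → (∑ x, σ x) = 1 →
      ∀ τ : (Fin (B / 2) → Bool) → ℝ, (∀ t, 0 ≤ τ t) → (∑ t, τ t) = 1 →
      ¬ (prHit σ τ ≤ 1 / 42 ∧
         (1 - γ) * Real.logb 2 (B : ℝ) ≤ condEntS σ τ ∧
         (B : ℝ) / 2 - (1 / 840) * (B : ℝ) ^ ((1 : ℝ) - 7 * γ) ≤ condEntT σ τ) := by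
  refine ⟨⌈(2:ℝ) ^ ((1:ℝ)/γ)⌉₊ + 2, ?_⟩
  intro B hB hdvd σ hσ0 hσ1 τ hτ0 hτ1
  rintro ⟨h1, h2, h3⟩
  have hB2 : 2 ≤ B := by omega
  have hn2 : B/2 * 2 = B := Nat.div_mul_cancel hdvd
  have hBR : (2:ℝ) ^ ((1:ℝ)/γ) ≤ (B:ℝ) := by
    have hc := Nat.le_ceil ((2:ℝ) ^ ((1:ℝ)/γ))
    have h' : ((⌈(2:ℝ) ^ ((1:ℝ)/γ)⌉₊ : ℕ) : ℝ) ≤ (B:ℝ) := by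
      exact_mod_cast Nat.cast_le.mpr (le_trans (Nat.le_add_right _ 2) hB)
    linarith
  set L := Real.logb 2 (B:ℝ) with hLdef
  have hγL : 1/γ ≤ L := by
    have := Real.logb_le_logb_of_le one_lt_two
      (Real.rpow_pos_of_pos two_pos ((1:ℝ)/γ)) hBR
    rwa [Real.logb_rpow two_pos (by norm_num)] at this
  have hL1 : (1:ℝ) ≤ L := by
    have : Real.logb 2 (2:ℝ) ≤ L :=
      Real.logb_le_logb_of_le one_lt_two two_pos (by exact_mod_cast hB2)
    simpa using this
  -- Z
  set Z := ∑ x' : Fin B, ∑ t' : Fin (B / 2) → Bool,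
    if memT t' x' then 0 else σ x' * τ t' with hZdef
  have hcj : ∀ x t, condJoint σ τ x t = (if memT t x then 0 else σ x * τ t) / Z := by
    intro x t; rfl
  have hZsplit : prHit σ τ + Z = 1 := by
    have e : prHit σ τ + Z = ∑ x : Fin B, ∑ t : Fin (B/2) → Bool, σ x * τ t := by
      rw [prHit, hZdef, ← Finset.sum_add_distrib]
      apply Finset.sum_congr rfl; intro x _
      rw [← Finset.sum_add_distrib]
      apply Finset.sum_congr rfl; intro t _
      split <;> ring
    rw [e]
    simp_rw [← Finset.mul_sum, hτ1, mul_one]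
    exact hσ1
  have hHit0 : 0 ≤ prHit σ τ := by
    apply Finset.sum_nonneg; intro x _
    apply Finset.sum_nonneg; intro t _
    split
    · exact mul_nonneg (hσ0 x) (hτ0 t)
    · exact le_rfl
  have hZ42 : 41/42 ≤ Z := by linarith
  have hZ1 : Z ≤ 1 := by linarith
  have hZpos : 0 < Z := by linarith
  have hcjnn : ∀ x t, 0 ≤ condJoint σ τ x t := by
    intro x t
    rw [hcj]
    apply div_nonneg _ hZpos.le
    split
    · exact le_rfl
    · exact mul_nonneg (hσ0 x) (hτ0 t)
  have hsumXT : ∑ x : Fin B, ∑ t : Fin (B/2) → Bool, condJoint σ τ x t = 1 := by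
    simp_rw [hcj, ← Finset.sum_div]
    exact div_self (ne_of_gt hZpos)
  have hsumTX : ∑ t : Fin (B/2) → Bool, ∑ x : Fin B, condJoint σ τ x t = 1 := by
    rw [Finset.sum_comm]; exact hsumXT
  set PS : Fin B → ℝ := fun x => ∑ t, condJoint σ τ x t with hPSdef
  set PT : (Fin (B/2) → Bool) → ℝ := fun t => ∑ x, condJoint σ τ x t with hPTdef
  set r : Fin (B/2) → Bool → ℝ := fun k b => ∑ t, if t k = b then PT t else 0 with hrdef
  have hPTnn : ∀ t, 0 ≤ PT t := fun t => Finset.sum_nonneg fun x _ => hcjnn x t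
  have hPSnn : ∀ x, 0 ≤ PS x := fun x => Finset.sum_nonneg fun t _ => hcjnn x t
  have hrnn : ∀ k b, 0 ≤ r k b := by
    intro k b
    apply Finset.sum_nonneg; intro t _
    split <;> [exact hPTnn t; exact le_rfl]
  have hrsum : ∀ k, r k true + r k false = 1 := by
    intro k
    rw [hrdef]
    simp only
    rw [← Finset.sum_add_distrib, ← hsumTX]
    apply Finset.sum_congr rfl
    intro t _
    cases ht : t k <;> simp [ht]
  -- entropy of t bound
  have hET : condEntT σ τ ≤ ∑ k : Fin (B/2),
      (r k true * Real.logb 2 (r k true)⁻¹ + r k false * Real.logb 2 (r k false)⁻¹) := by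
    calc condEntT σ τ ≤ ∑ t : Fin (B/2) → Bool, PT t * Real.logb 2 (PT t)⁻¹ :=
          entT_le σ τ hcjnn hsumXT
      _ ≤ _ := subadd PT r (fun k b => rfl) hPTnn hsumTX
  set eps := (1/840) * (B:ℝ) ^ ((1:ℝ) - 7*γ) with hepsdef
  have hcast : ((B/2 : ℕ) : ℝ) = (B:ℝ)/2 := by
    have : ((B/2 : ℕ) : ℝ) * 2 = (B:ℝ) := by exact_mod_cast congrArg (Nat.cast : ℕ → ℝ) hn2
    linarith
  have hdef1 : ∑ k : Fin (B/2), ((1:ℝ) -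
      (r k true * Real.logb 2 (r k true)⁻¹ + r k false * Real.logb 2 (r k false)⁻¹)) ≤ eps := by
    rw [Finset.sum_sub_distrib]
    simp only [Finset.sum_const, Finset.card_univ, Fintype.card_fin, nsmul_eq_mul, mul_one]
    rw [hcast]
    have := hET
    linarith
  -- bad pairs
  set Bad : Finset (Fin (B/2)) :=
    Finset.univ.filter (fun k => r k true < 2/5 ∨ r k false < 2/5) with hBaddef
  have hBadcard : (Bad.card : ℝ) * (1/50) ≤ eps := by
    have hsub : ∑ k ∈ Bad, ((1:ℝ)/50) ≤ ∑ k ∈ Bad, ((1:ℝ) -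
        (r k true * Real.logb 2 (r k true)⁻¹ + r k false * Real.logb 2 (r k false)⁻¹)) := by
      apply Finset.sum_le_sum
      intro k hk
      rw [hBaddef, Finset.mem_filter] at hk
      rcases hk.2 with hlt | hlt
      · have := bin_le_small (hrnn k true) (hrnn k false) (hrsum k) (le_of_lt hlt)
        linarith
      · have := bin_le_small (hrnn k false) (hrnn k true)
          (by rw [add_comm]; exact hrsum k) (le_of_lt hlt)
        linarith
    have hfull : ∑ k ∈ Bad, ((1:ℝ) -
        (r k true * Real.logb 2 (r k true)⁻¹ + r k false * Real.logb 2 (r k false)⁻¹)) ≤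
        ∑ k : Fin (B/2), ((1:ℝ) -
        (r k true * Real.logb 2 (r k true)⁻¹ + r k false * Real.logb 2 (r k false)⁻¹)) := by
      apply Finset.sum_le_sum_of_subset_of_nonneg (Finset.subset_univ _)
      intro k _ _
      have := bin_le_one (hrnn k true) (hrnn k false) (hrsum k)
      linarith
    rw [Finset.sum_const, nsmul_eq_mul] at hsub
    linarith
  -- the set S of bad elements
  set S : Finset (Fin B) :=
    Finset.univ.filter (fun x => ∃ k ∈ Bad, (x : ℕ)/2 = (k : ℕ)) with hSdef
  have hScard : (S.card : ℝ) ≤ 2 * Bad.card := by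
    have hinj : ∀ x ∈ S, ∀ y ∈ S,
        (fun x : Fin B => ((x:ℕ)/2, (x:ℕ)%2)) x = (fun x : Fin B => ((x:ℕ)/2, (x:ℕ)%2)) y →
        x = y := by
      intro x _ y _ hxy
      simp only [Prod.mk.injEq] at hxy
      apply Fin.ext
      omega
    have hmaps : ∀ x ∈ S, (fun x : Fin B => ((x:ℕ)/2, (x:ℕ)%2)) x ∈
        (Bad.image (fun k : Fin (B/2) => (k:ℕ))) ×ˢ ({0,1} : Finset ℕ) := by
      intro x hx
      rw [hSdef, Finset.mem_filter] at hx
      obtain ⟨-, k, hk, hke⟩ := hx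
      rw [Finset.mem_product]
      constructor
      · exact Finset.mem_image.mpr ⟨k, hk, hke.symm⟩
      · simp only [Finset.mem_insert, Finset.mem_singleton]
        omega
    have := Finset.card_le_card_of_injOn _ hmaps hinj
    have hcard2 : ((Bad.image (fun k : Fin (B/2) => (k:ℕ))) ×ˢ ({0,1} : Finset ℕ)).card ≤
        Bad.card * 2 := by
      rw [Finset.card_product]
      have h2 : ({0,1} : Finset ℕ).card = 2 := by decide
      rw [h2]
      exact Nat.mul_le_mul_right 2 (Finset.card_image_le)
    have : S.card ≤ Bad.card * 2 := le_trans this hcard2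
    calc (S.card : ℝ) ≤ ((Bad.card * 2 : ℕ) : ℝ) := Nat.cast_le.mpr this
      _ = 2 * Bad.card := by push_cast; ring
  -- hit probability chain
  have hfoldPS : ∀ x, (∑ t, condJoint σ τ x t) = PS x := fun _ => rfl
  have hfoldPT : ∀ t, (∑ x, condJoint σ τ x t) = PT t := fun _ => rfl
  have hPSx : ∀ x, PS x * Z = σ x * (∑ t, if memT t x then 0 else τ t) := by
    intro x
    rw [← hfoldPS]
    simp only [hcj]
    rw [← Finset.sum_div, div_mul_cancel₀ _ (ne_of_gt hZpos), Finset.mul_sum]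
    apply Finset.sum_congr rfl
    intro t _
    split <;> ring
  have hqnn : ∀ x, 0 ≤ (∑ t, if memT t x then 0 else τ t) := by
    intro x
    apply Finset.sum_nonneg; intro t _
    split <;> [exact le_rfl; exact hτ0 t]
  have hqle : ∀ x, (∑ t, if memT t x then 0 else τ t) ≤ 1 := by
    intro x
    rw [← hτ1]
    apply Finset.sum_le_sum
    intro t _
    split <;> [exact hτ0 t; exact le_rfl]
  have hPSle : ∀ x, PS x ≤ (42/41) * σ x := by
    intro x
    have h := hPSx x
    have h2 : PS x * Z ≤ σ x := by
      rw [h]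
      nlinarith [hσ0 x, hqle x, hqnn x]
    nlinarith [hPSnn x, hZ42, hZ1, mul_nonneg (hPSnn x) (sub_nonneg.mpr hZ42)]
  have hPTt : ∀ t, Z * PT t = τ t * (∑ x, if memT t x then 0 else σ x) := by
    intro t
    rw [← hfoldPT]
    simp only [hcj]
    rw [← Finset.sum_div, mul_div_cancel₀ _ (ne_of_gt hZpos), Finset.mul_sum]
    apply Finset.sum_congr rfl
    intro x _
    split <;> ring
  have hmle : ∀ t, (∑ x, if memT t x then 0 else σ x) ≤ 1 := by
    intro t
    rw [← hσ1]
    apply Finset.sum_le_sum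
    intro x _
    split <;> [exact hσ0 x; exact le_rfl]
  have hitlow : ∀ x : Fin B, x ∉ S → 1/3 ≤ ∑ t, if memT t x then τ t else 0 := by
    intro x hxS
    have hx2 : (x:ℕ)/2 < B/2 := by have := x.isLt; omega
    have hchar : ∀ t : Fin (B/2) → Bool, memT t x ↔ t ⟨(x:ℕ)/2, hx2⟩ = decide ((x:ℕ)%2 = 1) :=
      fun t => memT_iff t x hx2
    have hks : (⟨(x:ℕ)/2, hx2⟩ : Fin (B/2)) ∉ Bad := by
      intro hk
      apply hxS
      rw [hSdef, Finset.mem_filter]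
      exact ⟨Finset.mem_univ x, ⟨(x:ℕ)/2, hx2⟩, hk, rfl⟩
    have hrk : 2/5 ≤ r ⟨(x:ℕ)/2, hx2⟩ (decide ((x:ℕ)%2 = 1)) := by
      rw [hBaddef, Finset.mem_filter, not_and_or] at hks
      rcases hks with hks | hks
      · exact absurd (Finset.mem_univ _) hks
      · push_neg at hks
        cases hdec : decide ((x:ℕ)%2 = 1)
        · exact hks.2
        · exact hks.1
    have step2 : (∑ t, if memT t x then PT t else 0) = r ⟨(x:ℕ)/2, hx2⟩ (decide ((x:ℕ)%2 = 1)) := by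
      rw [hrdef]
      apply Finset.sum_congr rfl
      intro t _
      exact if_congr (hchar t) rfl rfl
    have step1 : (∑ t, if memT t x then Z * PT t else 0) ≤ ∑ t, if memT t x then τ t else 0 := by
      apply Finset.sum_le_sum
      intro t _
      split
      · rw [hPTt t]
        nlinarith [hτ0 t, hmle t]
      · exact le_rfl
    have step3 : (∑ t, if memT t x then Z * PT t else 0) = Z * ∑ t, if memT t x then PT t else 0 := by
      rw [Finset.mul_sum]
      apply Finset.sum_congr rfl
      intro t _
      split <;> ring
    calc (1:ℝ)/3 ≤ (41/42) * (2/5) := by norm_num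
      _ ≤ Z * r ⟨(x:ℕ)/2, hx2⟩ (decide ((x:ℕ)%2 = 1)) := by
          apply mul_le_mul hZ42 hrk (by norm_num) (by linarith)
      _ = ∑ t, if memT t x then Z * PT t else 0 := by rw [step3, step2]
      _ ≤ _ := step1
  have hprHit : prHit σ τ = ∑ x, σ x * (∑ t, if memT t x then τ t else 0) := by
    rw [prHit]
    apply Finset.sum_congr rfl
    intro x _
    rw [Finset.mul_sum]
    apply Finset.sum_congr rfl
    intro t _
    split <;> ring
  have hGσ : ∑ x ∈ Sᶜ, σ x ≤ 1/14 := by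
    have hc1 : ∑ x ∈ Sᶜ, σ x * (1/3) ≤ ∑ x ∈ Sᶜ, σ x * (∑ t, if memT t x then τ t else 0) := by
      apply Finset.sum_le_sum
      intro x hx
      exact mul_le_mul_of_nonneg_left (hitlow x (Finset.mem_compl.mp hx)) (hσ0 x)
    have hc2 : ∑ x ∈ Sᶜ, σ x * (∑ t, if memT t x then τ t else 0) ≤ prHit σ τ := by
      rw [hprHit]
      apply Finset.sum_le_sum_of_subset_of_nonneg (Finset.subset_univ _)
      intro x _ _
      apply mul_nonneg (hσ0 x)
      apply Finset.sum_nonneg; intro t _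
      split <;> [exact hτ0 t; exact le_rfl]
    rw [← Finset.sum_mul] at hc1
    linarith
  have hβG : ∑ x ∈ Sᶜ, PS x ≤ 3/41 := by
    have : ∑ x ∈ Sᶜ, PS x ≤ ∑ x ∈ Sᶜ, (42/41) * σ x :=
      Finset.sum_le_sum fun x _ => hPSle x
    rw [← Finset.mul_sum] at this
    linarith
  have hsumPS : ∑ x, PS x = 1 := hsumXT
  have hβsplit : ∑ x ∈ S, PS x + ∑ x ∈ Sᶜ, PS x = 1 := by
    rw [Finset.sum_add_sum_compl]
    exact hsumPS
  have hβS0 : 0 ≤ ∑ x ∈ S, PS x := Finset.sum_nonneg fun x _ => hPSnn x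
  have hβG0 : 0 ≤ ∑ x ∈ Sᶜ, PS x := Finset.sum_nonneg fun x _ => hPSnn x
  -- entropy of s bound
  have hES : condEntS σ τ ≤
      ∑ x ∈ S, PS x * Real.logb 2 (PS x)⁻¹ + ∑ x ∈ Sᶜ, PS x * Real.logb 2 (PS x)⁻¹ := by
    rw [Finset.sum_add_sum_compl]
    exact entS_le σ τ hcjnn hsumTX
  have hgb1 := group_bound S PS (fun x _ => hPSnn x) (by linarith)
  have hgb2 := group_bound Sᶜ PS (fun x _ => hPSnn x) (by linarith)
  have hrpowpos : (0:ℝ) < (B:ℝ) ^ ((1:ℝ) - 7*γ) :=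
    Real.rpow_pos_of_pos (by positivity) _
  have hlogS : (∑ x ∈ S, PS x) * Real.logb 2 (max 1 (S.card:ℝ)) ≤
      (∑ x ∈ S, PS x) * ((1 - 7*γ) * L) := by
    rcases Nat.eq_zero_or_pos S.card with h0 | hpos
    · have hSe : S = ∅ := Finset.card_eq_zero.mp h0
      rw [hSe]
      simp
    · apply mul_le_mul_of_nonneg_left _ hβS0
      have h1c : (1:ℝ) ≤ (S.card : ℝ) := by exact_mod_cast hpos
      rw [max_eq_right h1c]
      have hle : (S.card : ℝ) ≤ (B:ℝ) ^ ((1:ℝ) - 7*γ) := by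
        rw [hepsdef] at hBadcard
        nlinarith [hrpowpos]
      calc Real.logb 2 (S.card:ℝ) ≤ Real.logb 2 ((B:ℝ) ^ ((1:ℝ)-7*γ)) :=
            Real.logb_le_logb_of_le one_lt_two (by linarith) hle
        _ = (1-7*γ) * L := by
            rw [Real.logb_rpow_eq_mul_logb_of_pos (by positivity)]
  have hlogG : (∑ x ∈ Sᶜ, PS x) * Real.logb 2 (max 1 ((Sᶜ : Finset (Fin B)).card:ℝ)) ≤
      (∑ x ∈ Sᶜ, PS x) * L := by
    apply mul_le_mul_of_nonneg_left _ hβG0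
    have hcard : ((Sᶜ : Finset (Fin B)).card : ℝ) ≤ (B:ℝ) := by
      have h := Finset.card_le_univ (Sᶜ : Finset (Fin B))
      have h2 : Fintype.card (Fin B) = B := Fintype.card_fin B
      rw [h2] at h
      exact_mod_cast h
    have hBpos1 : (1:ℝ) ≤ (B:ℝ) := by exact_mod_cast Nat.one_le_of_lt hB2
    exact Real.logb_le_logb_of_le one_lt_two
      (lt_of_lt_of_le zero_lt_one (le_max_left _ _)) (max_le hBpos1 hcard)
  have hchain : (1-γ)*L ≤
      (∑ x ∈ S, PS x) * ((1-7*γ)*L) + (∑ x ∈ Sᶜ, PS x) * L + 3 := by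
    linarith [h2, hES, hgb1, hgb2, hlogS, hlogG]
  have hβS : ∑ x ∈ S, PS x = 1 - ∑ x ∈ Sᶜ, PS x := by linarith
  rw [hβS] at hchain
  have hγL1 : 1 ≤ γ * L := by
    rw [div_le_iff₀ hγ] at hγL
    linarith [hγL]
  have h67 : (0:ℝ) ≤ 6 - 7 * (∑ x ∈ Sᶜ, PS x) := by linarith
  have hprod : 225/41 ≤ (γ*L) * (6 - 7*(∑ x ∈ Sᶜ, PS x)) := by
    have := mul_le_mul_of_nonneg_right hγL1 h67
    nlinarith
  nlinarith [hchain, hprod]
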